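/- Let k₁ ≤ 0 < k₂ and k_h = max(|k₁|, k₂). Fix ρ > 0 and consider differentiable functions δx : [0,∞) → ℝ and δv : [0,∞) → ℝ with |δv(t)| ≤ ρ for all t, such that whenever (δx(t) − k₁|δv(t)|)(δx(t) − k₂|δv(t)|) > 0 (i.e., the pair lies outside the sector), one has δx(t)·δx'(t) ≤ −α·δx(t)² for a constant α > 0. If |δx(0)| > k_h·ρ, then for all t ≥ 0 while |δx(s)| > k_h·ρ on [0,t], we have |δx(t)| ≤ e^{−αt}·|δx(0)|; consequently there exists a finite time T with |δx(T)| ≤ k_h·ρ. -/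

import Mathlib

open Real Set

/-- Outside the sector, the state difference of FHIGS decays exponentially, forcing
entry into the box {|δx| ≤ k_h ρ} in finite time. -/
theorem fhigs_enter_box (k₁ k₂ α ρ : ℝ) (δx δv : ℝ → ℝ)
    (hk₁ : k₁ ≤ 0) (hk₂ : 0 < k₂) (hα : 0 < α) (hρ : 0 < ρ)
    (hdx : Differentiable ℝ δx) (hdv : Differentiable ℝ δv)
    (hvbd : ∀ t, 0 ≤ t → |δv t| ≤ ρ)
    (hdecay : ∀ t, 0 ≤ t →
      0 < (δx t - k₁ * |δv t|) * (δx t - k₂ * |δv t|) →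
      δx t * deriv δx t ≤ -α * (δx t) ^ 2)
    (h0 : max |k₁| k₂ * ρ < |δx 0|) :
    (∀ t, 0 ≤ t → (∀ s ∈ Set.Icc 0 t, max |k₁| k₂ * ρ < |δx s|) →
      |δx t| ≤ Real.exp (-α * t) * |δx 0|) ∧
    (∃ T, 0 ≤ T ∧ |δx T| ≤ max |k₁| k₂ * ρ) := by
  set kh := max |k₁| k₂ with hkh
  have hkh1 : |k₁| ≤ kh := le_max_left _ _
  have hkh2 : k₂ ≤ kh := le_max_right _ _
  have hkhpos : 0 < kh := lt_of_lt_of_le hk₂ hkh2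
  -- main decay estimate
  have main : ∀ t, 0 ≤ t → (∀ s ∈ Set.Icc 0 t, kh * ρ < |δx s|) →
      |δx t| ≤ Real.exp (-α * t) * |δx 0| := by
    intro t ht hsec
    -- on [0,t], the decay inequality holds
    have hdec : ∀ s ∈ Set.Icc (0:ℝ) t, δx s * deriv δx s ≤ -α * (δx s) ^ 2 := by
      intro s hs
      have hs0 : (0:ℝ) ≤ s := hs.1
      apply hdecay s hs0
      have hv : |δv s| ≤ ρ := hvbd s hs0
      have hv0 : 0 ≤ |δv s| := abs_nonneg _
      have hbig := hsec s hs
      rcases le_or_gt 0 (δx s) with hpos | hneg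
      · have habs : |δx s| = δx s := abs_of_nonneg hpos
        rw [habs] at hbig
        have h1 : k₁ * |δv s| ≤ 0 := mul_nonpos_of_nonpos_of_nonneg hk₁ hv0
        have h2 : k₂ * |δv s| ≤ kh * ρ := by nlinarith
        have : 0 < δx s - k₁ * |δv s| := by nlinarith
        have : 0 < δx s - k₂ * |δv s| := by nlinarith
        positivity
      · have habs : |δx s| = -(δx s) := abs_of_neg hneg
        rw [habs] at hbig
        have hk1' : -|k₁| ≤ k₁ := neg_abs_le k₁
        have h1 : -(kh * ρ) ≤ k₁ * |δv s| := by nlinarith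
        have h2 : δx s - k₁ * |δv s| < 0 := by nlinarith
        have h3 : δx s - k₂ * |δv s| < 0 := by nlinarith [mul_nonneg hk₂.le hv0]
        exact mul_pos_of_neg_of_neg h2 h3
    -- Lyapunov function g s = exp(2αs) (δx s)^2 is antitone on [0,t]
    set g : ℝ → ℝ := fun s => Real.exp (2 * α * s) * (δx s) ^ 2 with hg
    have hgd : ∀ s, HasDerivAt g
        (2 * α * Real.exp (2 * α * s) * (δx s) ^ 2
          + Real.exp (2 * α * s) * (2 * δx s * deriv δx s)) s := by
      intro s
      have h1 : HasDerivAt (fun s => Real.exp (2 * α * s)) (Real.exp (2 * α * s) * (2 * α)) s := by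
        simpa using ((hasDerivAt_id s).const_mul (2 * α)).exp
      have h2 : HasDerivAt (fun s => (δx s) ^ 2) (2 * δx s ^ 1 * deriv δx s) s :=
        ((hdx s).hasDerivAt).pow 2
      have h3 : HasDerivAt (fun s => Real.exp (2 * α * s) * (δx s) ^ 2)
          (Real.exp (2 * α * s) * (2 * α) * (δx s) ^ 2
            + Real.exp (2 * α * s) * (2 * δx s ^ 1 * deriv δx s)) s := h1.mul h2
      convert h3 using 1
      ring
    have hanti : AntitoneOn g (Set.Icc 0 t) := by
      apply antitoneOn_of_deriv_nonpos (convex_Icc 0 t)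
      · exact fun s _ => (hgd s).continuousAt.continuousWithinAt
      · exact fun s _ => ((hgd s).differentiableAt).differentiableWithinAt
      · intro s hs
        rw [interior_Icc] at hs
        have hs' : s ∈ Set.Icc (0:ℝ) t := ⟨hs.1.le, hs.2.le⟩
        rw [(hgd s).deriv]
        have hd := hdec s hs'
        have he : 0 < Real.exp (2 * α * s) := Real.exp_pos _
        nlinarith
    have hgt : g t ≤ g 0 := hanti ⟨le_rfl, ht⟩ ⟨ht, le_rfl⟩ ht
    simp only [hg, mul_zero, Real.exp_zero, one_mul] at hgt
    have he : 0 < Real.exp (2 * α * t) := Real.exp_pos _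
    have hsq : (δx t) ^ 2 ≤ (Real.exp (-α * t) * |δx 0|) ^ 2 := by
      have hexp : Real.exp (-α * t) * Real.exp (-α * t) * Real.exp (2 * α * t) = 1 := by
        rw [← Real.exp_add, ← Real.exp_add, show -α * t + -α * t + 2 * α * t = 0 by ring,
          Real.exp_zero]
      have h2 : (Real.exp (-α * t) * |δx 0|) ^ 2 * Real.exp (2 * α * t) = (δx 0) ^ 2 := by
        rw [mul_pow, sq_abs]
        linear_combination (δx 0) ^ 2 * hexp
      nlinarith
    have h1 : 0 ≤ Real.exp (-α * t) * |δx 0| := by positivity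
    nlinarith [abs_nonneg (δx t), sq_abs (δx t)]
  refine ⟨main, ?_⟩
  -- finite entry time
  set T := Real.log (|δx 0| / (kh * ρ)) / α with hT
  have hx0 : 0 < |δx 0| := lt_trans (by positivity) h0
  have hratio : 1 < |δx 0| / (kh * ρ) := (one_lt_div (by positivity)).2 h0
  have hTpos : 0 ≤ T := by
    apply div_nonneg _ hα.le
    exact Real.log_nonneg hratio.le
  by_cases hall : ∀ s ∈ Set.Icc (0:ℝ) T, kh * ρ < |δx s|
  · exfalso
    have := main T hTpos hall
    have hexp : Real.exp (-α * T) = kh * ρ / |δx 0| := by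
      have harg : -α * T = Real.log (kh * ρ / |δx 0|) := by
        rw [hT]
        have h1 : -α * (Real.log (|δx 0| / (kh * ρ)) / α) = -Real.log (|δx 0| / (kh * ρ)) := by
          field_simp
        rw [h1, ← Real.log_inv, inv_div]
      rw [harg, Real.exp_log (by positivity)]
    rw [hexp] at this
    have : kh * ρ / |δx 0| * |δx 0| = kh * ρ := by field_simp
    have hTle : |δx T| ≤ kh * ρ := by
      calc |δx T| ≤ kh * ρ / |δx 0| * |δx 0| := by assumption
        _ = kh * ρ := this
    exact absurd hTle (not_le.2 (hall T ⟨hTpos, le_refl T⟩))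
  · push_neg at hall
    obtain ⟨s, hs, hle⟩ := hall
    exact ⟨s, hs.1, hle⟩
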